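/- Let (Ω, 𝔽, ℙ) be a probability space and let X_1, X_2, … be {0,1}-valued random variables. Suppose there are constants C ≥ 1, ρ ∈ (0,1), and D ∈ (0,1] such that (i) |𝔼[X_i] − D| ≤ 2·C·ρ^{i−1} for all i ≥ 1, and (ii) 𝔼[X_i·X_j] ≤ 𝔼[X_i]·𝔼[X_j] + 4·C·ρ^{j−i−1}·𝔼[X_i] for all 1 ≤ i < j. Then for every integer k ≥ 22·C/((1 − ρ)·D), 𝔼[((1/k)·Σ_{i=1}^k X_i − D)²] ≤ 10·C·D/((1 − ρ)·k). -/

import Mathlib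

open MeasureTheory

private lemma geom_range_le' (ρ : ℝ) (h0 : 0 ≤ ρ) (h1 : ρ < 1) (n : ℕ) :
    ∑ i ∈ Finset.range n, ρ ^ i ≤ 1/(1-ρ) := by
  rw [geom_sum_eq h1.ne n]
  have h2 : (0:ℝ) < 1 - ρ := by linarith
  have h3 : (ρ ^ n - 1) / (ρ - 1) = (1 - ρ^n)/(1-ρ) := by
    rw [div_eq_div_iff (by linarith) (by linarith)]; ring
  rw [h3]
  have hn : 0 ≤ ρ^n := pow_nonneg h0 n
  gcongr
  linarith

private lemma geom_Icc_le' (ρ : ℝ) (h0 : 0 ≤ ρ) (h1 : ρ < 1) (a b : ℕ) :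
    ∑ j ∈ Finset.Icc a b, ρ ^ (j - a) ≤ 1/(1-ρ) := by
  have h : ∑ j ∈ Finset.Icc a b, ρ ^ (j - a) = ∑ d ∈ Finset.range (b+1-a), ρ ^ d := by
    apply Finset.sum_nbij' (i := fun j => j - a) (j := fun d => a + d) <;> intros <;>
      simp_all [Finset.mem_Icc, Finset.mem_range] <;> omega
  rw [h]; exact geom_range_le' ρ h0 h1 _

private lemma final_arith' (C t D M T k : ℝ) (hC : 1 ≤ C) (ht : 1 ≤ t)
    (hT : T ≤ M*M + M + 8*C*t*M)
    (ha2 : M - k*D ≤ 2*C*t) (ha3 : -(2*C*t) ≤ M - k*D)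
    (ha4 : 22*C*t ≤ k*D) (hM0 : 0 ≤ M) :
    T - 2*D*M*k + D^2*k^2 ≤ 10*C*t*D*k := by
  have a5 : 1 ≤ C*t := by nlinarith
  have e1 : T - 2*D*M*k + D^2*k^2 ≤ (M - k*D)^2 + M*(1+8*C*t) := by nlinarith
  have e2 : (M - k*D)^2 ≤ 4*(C*t)^2 := by nlinarith
  have e3 : M*(1+8*C*t) ≤ (k*D + 2*C*t)*(9*C*t) := by nlinarith
  have e4 : 4*(C*t)^2 + (k*D+2*C*t)*(9*C*t) ≤ 10*C*t*D*k := by nlinarith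
  linarith

theorem empirical_frequency_mse {Ω : Type*} [MeasurableSpace Ω]
    (ℙ : Measure Ω) [IsProbabilityMeasure ℙ]
    (X : ℕ → Ω → ℝ) (hmeas : ∀ i, Measurable (X i))
    (hval : ∀ i ω, X i ω = 0 ∨ X i ω = 1)
    (C ρ D : ℝ) (hC : 1 ≤ C) (hρ0 : 0 < ρ) (hρ1 : ρ < 1) (hD0 : 0 < D) (hD1 : D ≤ 1)
    (hbias : ∀ i : ℕ, 1 ≤ i → |(∫ ω, X i ω ∂ℙ) - D| ≤ 2 * C * ρ ^ (i - 1))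
    (hcov : ∀ i j : ℕ, 1 ≤ i → i < j →
      (∫ ω, X i ω * X j ω ∂ℙ) ≤
        (∫ ω, X i ω ∂ℙ) * (∫ ω, X j ω ∂ℙ) + 4 * C * ρ ^ (j - i - 1) * (∫ ω, X i ω ∂ℙ)) :
    ∀ k : ℕ, 22 * C / ((1 - ρ) * D) ≤ (k : ℝ) →
      (∫ ω, ((1 / (k : ℝ)) * (∑ i ∈ Finset.Icc 1 k, X i ω) - D) ^ 2 ∂ℙ)
        ≤ 10 * C * D / ((1 - ρ) * (k : ℝ)) := by
  intro k hk
  have h1ρ : (0:ℝ) < 1 - ρ := by linarith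
  have hC0 : (0:ℝ) < C := by linarith
  set t : ℝ := 1/(1-ρ) with htdef
  have ht1 : 1 ≤ t := by rw [htdef, le_div_iff₀ h1ρ]; linarith
  have ht0 : 0 < t := by linarith
  -- k is large
  have hf5 : 22*C*t ≤ (k:ℝ)*D := by
    have h' : 22*C ≤ (k:ℝ)*((1-ρ)*D) := (div_le_iff₀ (by positivity)).mp hk
    rw [htdef, mul_one_div, div_le_iff₀ h1ρ]
    nlinarith
  have hkpos : (0:ℝ) < k := by nlinarith
  -- abbreviations
  obtain ⟨m, hm⟩ : ∃ m : ℕ → ℝ, ∀ i, m i = ∫ ω, X i ω ∂ℙ := ⟨_, fun _ => rfl⟩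
  obtain ⟨c, hc⟩ : ∃ c : ℕ → ℕ → ℝ, ∀ i j, c i j = ∫ ω, X i ω * X j ω ∂ℙ :=
    ⟨_, fun _ _ => rfl⟩
  simp only [← hm, ← hc] at hbias hcov
  set s : Finset ℕ := Finset.Icc 1 k with hsdef
  -- basic facts about X
  have hX0 : ∀ i ω, 0 ≤ X i ω := fun i ω => by rcases hval i ω with h|h <;> simp [h]
  have hX1 : ∀ i ω, X i ω ≤ 1 := fun i ω => by rcases hval i ω with h|h <;> simp [h]
  have intX : ∀ i, Integrable (X i) ℙ := fun i =>
    ⟨(hmeas i).aestronglyMeasurable, HasFiniteIntegral.of_bounded (C := 1)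
      (Filter.Eventually.of_forall fun ω => by
        rw [Real.norm_eq_abs, abs_le]; exact ⟨by linarith [hX0 i ω], hX1 i ω⟩)⟩
  have intXX : ∀ i j, Integrable (fun ω => X i ω * X j ω) ℙ := fun i j =>
    ⟨((hmeas i).mul (hmeas j)).aestronglyMeasurable, HasFiniteIntegral.of_bounded (C := 1)
      (Filter.Eventually.of_forall fun ω => by
        rw [Real.norm_eq_abs, abs_le]
        constructor
        · nlinarith [hX0 i ω, hX0 j ω]
        · nlinarith [hX0 i ω, hX0 j ω, hX1 i ω, hX1 j ω])⟩
  have hm0 : ∀ i, 0 ≤ m i := fun i => by rw [hm]; exact integral_nonneg (hX0 i)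
  have hm1 : ∀ i, m i ≤ 1 := fun i => by
    rw [hm]
    calc ∫ ω, X i ω ∂ℙ ≤ ∫ _, (1:ℝ) ∂ℙ := integral_mono (intX i) (integrable_const 1) (hX1 i)
    _ = 1 := by simp
  have hdiag : ∀ i, c i i = m i := fun i => by
    rw [hc, hm]
    exact integral_congr_ae (Filter.Eventually.of_forall fun ω => by
      rcases hval i ω with h|h <;> simp [h])
  have hsymm : ∀ i j, c i j = c j i := fun i j => by
    rw [hc, hc]
    exact integral_congr_ae (Filter.Eventually.of_forall fun ω => mul_comm _ _)
  -- M and T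
  set M : ℝ := ∑ i ∈ s, m i with hMdef
  set T : ℝ := ∑ i ∈ s, ∑ j ∈ s, c i j with hTdef
  -- expansion of the integral
  have i1 : Integrable (fun ω => ∑ i ∈ s, ∑ j ∈ s, X i ω * X j ω) ℙ :=
    integrable_finset_sum _ (fun i _ => integrable_finset_sum _ (fun j _ => intXX i j))
  have i2 : Integrable (fun ω => ∑ i ∈ s, X i ω) ℙ :=
    integrable_finset_sum _ (fun i _ => intX i)
  have expand : (∫ ω, ((1 / (k : ℝ)) * (∑ i ∈ s, X i ω) - D) ^ 2 ∂ℙ)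
      = (1/(k:ℝ))^2 * T - (2*D/(k:ℝ)) * M + D^2 := by
    have hpt : ∀ ω, ((1/(k:ℝ)) * (∑ i ∈ s, X i ω) - D)^2
        = (1/(k:ℝ))^2 * (∑ i ∈ s, ∑ j ∈ s, X i ω * X j ω)
          - (2*D/(k:ℝ)) * (∑ i ∈ s, X i ω) + D^2 := by
      intro ω
      have h := Finset.sum_mul_sum s s (fun i => X i ω) (fun j => X j ω)
      have hk2 : (2*D/(k:ℝ)) = 2*D*(1/(k:ℝ)) := by ring
      linear_combination ((1:ℝ)/(k:ℝ))^2 * h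
    calc (∫ ω, ((1 / (k : ℝ)) * (∑ i ∈ s, X i ω) - D) ^ 2 ∂ℙ)
        = ∫ ω, ((1/(k:ℝ))^2 * (∑ i ∈ s, ∑ j ∈ s, X i ω * X j ω)
            - (2*D/(k:ℝ)) * (∑ i ∈ s, X i ω) + D^2) ∂ℙ :=
          integral_congr_ae (Filter.Eventually.of_forall hpt)
      _ = (1/(k:ℝ))^2 * (∫ ω, ∑ i ∈ s, ∑ j ∈ s, X i ω * X j ω ∂ℙ)
            - (2*D/(k:ℝ)) * (∫ ω, ∑ i ∈ s, X i ω ∂ℙ) + D^2 := by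
          have i3 : Integrable (fun ω => (1/(k:ℝ))^2 * (∑ i ∈ s, ∑ j ∈ s, X i ω * X j ω)
              - (2*D/(k:ℝ)) * (∑ i ∈ s, X i ω)) ℙ := (i1.const_mul _).sub (i2.const_mul _)
          have i4 : Integrable (fun ω => (1/(k:ℝ))^2 * (∑ i ∈ s, ∑ j ∈ s, X i ω * X j ω)) ℙ :=
            i1.const_mul _
          have i5 : Integrable (fun ω => (2*D/(k:ℝ)) * (∑ i ∈ s, X i ω)) ℙ := i2.const_mul _
          rw [integral_add i3 (integrable_const _), integral_sub i4 i5,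
            integral_const_mul, integral_const_mul, integral_const]
          simp
      _ = (1/(k:ℝ))^2 * T - (2*D/(k:ℝ)) * M + D^2 := by
          rw [hTdef, hMdef]
          rw [integral_finset_sum _ (fun i _ => integrable_finset_sum _ (fun j _ => intXX i j)),
            integral_finset_sum _ (fun i _ => intX i)]
          congr 1
          congr 1
          · congr 1
            refine Finset.sum_congr rfl (fun i _ => ?_)
            rw [integral_finset_sum _ (fun j _ => intXX i j)]
            exact Finset.sum_congr rfl (fun j _ => (hc i j).symm)
          · congr 1
            exact Finset.sum_congr rfl (fun i _ => (hm i).symm)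
  -- per-term covariance bound
  have hrterm : ∀ i ∈ s, ∀ j ∈ s, c i j ≤ m i * m j +
      (if i = j then m i else if i < j then 4*C*ρ^(j-i-1)*m i else 4*C*ρ^(i-j-1)*m j) := by
    intro i hi j hj
    rw [hsdef, Finset.mem_Icc] at hi hj
    rcases lt_trichotomy i j with h|h|h
    · rw [if_neg h.ne, if_pos h]; exact hcov i j hi.1 h
    · subst h
      rw [if_pos rfl, hdiag i]
      nlinarith [hm0 i]
    · rw [if_neg h.ne', if_neg (lt_asymm h), hsymm i j, mul_comm (m i) (m j)]
      exact hcov j i hj.1 h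
  -- bound on T
  have hT : T ≤ M*M + M + 8*C*t*M := by
    have step1 : T ≤ ∑ i ∈ s, ∑ j ∈ s, (m i * m j +
        (if i = j then m i else if i < j then 4*C*ρ^(j-i-1)*m i else 4*C*ρ^(i-j-1)*m j)) := by
      rw [hTdef]
      exact Finset.sum_le_sum (fun i hi => Finset.sum_le_sum (fun j hj => hrterm i hi j hj))
    have step2 : ∑ i ∈ s, ∑ j ∈ s, (m i * m j +
        (if i = j then m i else if i < j then 4*C*ρ^(j-i-1)*m i else 4*C*ρ^(i-j-1)*m j))
        = M*M + ∑ i ∈ s, ∑ j ∈ s,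
          (if i = j then m i else if i < j then 4*C*ρ^(j-i-1)*m i else 4*C*ρ^(i-j-1)*m j) := by
      simp only [Finset.sum_add_distrib]
      congr 1
      rw [hMdef, Finset.sum_mul_sum]
    -- split r into three parts
    have hsplit : ∀ i j : ℕ,
        (if i = j then m i else if i < j then 4*C*ρ^(j-i-1)*m i else 4*C*ρ^(i-j-1)*m j)
        = (if i = j then m i else 0) + (if i < j then 4*C*ρ^(j-i-1)*m i else 0)
          + (if j < i then 4*C*ρ^(i-j-1)*m j else 0) := by
      intro i j
      rcases lt_trichotomy i j with h|h|h
      · rw [if_neg h.ne, if_pos h, if_neg h.ne, if_pos h, if_neg (lt_asymm h)]; ring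
      · subst h; simp
      · rw [if_neg h.ne', if_neg (lt_asymm h), if_neg h.ne', if_neg (lt_asymm h), if_pos h]; ring
    have hsum1 : ∑ i ∈ s, ∑ j ∈ s, (if i = j then m i else 0) = M := by
      rw [hMdef]
      refine Finset.sum_congr rfl (fun i hi => ?_)
      rw [Finset.sum_ite_eq s i (fun _ => m i), if_pos hi]
    have hrow : ∀ i ∈ s, (∑ j ∈ s, if i < j then 4*C*ρ^(j-i-1)*m i else 0)
        ≤ 4*C*t*m i := by
      intro i hi
      have e : (∑ j ∈ s, if i < j then 4*C*ρ^(j-i-1)*m i else 0)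
          = 4*C*(m i) * ∑ j ∈ Finset.Icc (i+1) k, ρ^(j-(i+1)) := by
        rw [← Finset.sum_filter]
        have hfe : s.filter (fun j => i < j) = Finset.Icc (i+1) k := by
          ext j; simp only [hsdef, Finset.mem_filter, Finset.mem_Icc]; omega
        rw [hfe, Finset.mul_sum]
        refine Finset.sum_congr rfl (fun j hj => ?_)
        rw [show j - i - 1 = j - (i+1) from by omega]; ring
      rw [e]
      calc 4*C*(m i) * ∑ j ∈ Finset.Icc (i+1) k, ρ^(j-(i+1))
          ≤ 4*C*(m i) * t := by
            rw [htdef]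
            exact mul_le_mul_of_nonneg_left (geom_Icc_le' ρ hρ0.le hρ1 (i+1) k)
              (mul_nonneg (by positivity) (hm0 i))
        _ = 4*C*t*m i := by ring
    have hsum2 : ∑ i ∈ s, ∑ j ∈ s, (if i < j then 4*C*ρ^(j-i-1)*m i else 0)
        ≤ 4*C*t*M := by
      calc ∑ i ∈ s, ∑ j ∈ s, (if i < j then 4*C*ρ^(j-i-1)*m i else 0)
          ≤ ∑ i ∈ s, 4*C*t*m i := Finset.sum_le_sum hrow
        _ = 4*C*t*M := by rw [hMdef, Finset.mul_sum]
    have hsum3 : ∑ i ∈ s, ∑ j ∈ s, (if j < i then 4*C*ρ^(i-j-1)*m j else 0)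
        = ∑ i ∈ s, ∑ j ∈ s, (if i < j then 4*C*ρ^(j-i-1)*m i else 0) :=
      Finset.sum_comm
    calc T ≤ M*M + ∑ i ∈ s, ∑ j ∈ s,
          (if i = j then m i else if i < j then 4*C*ρ^(j-i-1)*m i else 4*C*ρ^(i-j-1)*m j) := by
          rw [← step2]; exact step1
      _ = M*M + (∑ i ∈ s, ∑ j ∈ s, (if i = j then m i else 0))
            + (∑ i ∈ s, ∑ j ∈ s, (if i < j then 4*C*ρ^(j-i-1)*m i else 0))
            + (∑ i ∈ s, ∑ j ∈ s, (if j < i then 4*C*ρ^(i-j-1)*m j else 0)) := by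
          simp only [hsplit, Finset.sum_add_distrib]; ring
      _ ≤ M*M + M + 4*C*t*M + 4*C*t*M := by
          rw [hsum1, hsum3]
          have := hsum2
          linarith
      _ = M*M + M + 8*C*t*M := by ring
  -- bias bounds
  have hcard : ((s.card : ℕ) : ℝ) = (k : ℝ) := by
    rw [hsdef, Nat.card_Icc]; norm_num
  have hMD : |M - (k:ℝ)*D| ≤ 2*C*t := by
    have e : M - (k:ℝ)*D = ∑ i ∈ s, (m i - D) := by
      rw [Finset.sum_sub_distrib, Finset.sum_const, nsmul_eq_mul, hcard, hMdef]
    rw [e]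
    calc |∑ i ∈ s, (m i - D)| ≤ ∑ i ∈ s, |m i - D| := Finset.abs_sum_le_sum_abs _ _
      _ ≤ ∑ i ∈ s, 2*C*ρ^(i-1) := by
          refine Finset.sum_le_sum (fun i hi => ?_)
          rw [hsdef, Finset.mem_Icc] at hi
          exact hbias i hi.1
      _ = 2*C * ∑ i ∈ s, ρ^(i-1) := by rw [Finset.mul_sum]
      _ ≤ 2*C*t := by
          rw [htdef]
          exact mul_le_mul_of_nonneg_left (geom_Icc_le' ρ hρ0.le hρ1 1 k) (by positivity)
  have hM0 : 0 ≤ M := Finset.sum_nonneg (fun i _ => hm0 i)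
  -- conclude
  have habs := abs_le.mp hMD
  have key : T - 2*D*M*(k:ℝ) + D^2*(k:ℝ)^2 ≤ 10*C*t*D*(k:ℝ) :=
    final_arith' C t D M T (k:ℝ) hC ht1 hT habs.2 habs.1 hf5 hM0
  rw [expand]
  have hL : (1/(k:ℝ))^2 * T - (2*D/(k:ℝ)) * M + D^2
      = (T - 2*D*M*(k:ℝ) + D^2*(k:ℝ)^2)/(k:ℝ)^2 := by
    field_simp
  have hR : 10 * C * D / ((1 - ρ) * (k:ℝ)) = (10*C*t*D*(k:ℝ))/(k:ℝ)^2 := by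
    rw [htdef]; field_simp
  rw [hL, hR]
  gcongr
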